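/- For all k ≥ 3 and r ≥ 3, Λ_r(k) ≤ Λ_{r-1}(k-1), where Λ_r(k) is the minimum of Λ_r(H) over graphs H with clique number r and chromatic number at least k. -/

import Mathlib

open SimpleGraph Finset

def cone {n : ℕ} (H : SimpleGraph (Fin n)) : SimpleGraph (Fin (n+1)) :=
  SimpleGraph.map Fin.castSuccEmb H ⊔ SimpleGraph.fromRel (fun a _ => a = Fin.last n)

lemma cone_adj {n : ℕ} (H : SimpleGraph (Fin n)) (a b : Fin (n+1)) :
    (cone H).Adj a b ↔ (a ≠ b ∧ (a = Fin.last n ∨ b = Fin.last n)) ∨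
      ∃ u v, H.Adj u v ∧ Fin.castSucc u = a ∧ Fin.castSucc v = b := by
  simp only [cone, SimpleGraph.sup_adj, SimpleGraph.fromRel_adj, SimpleGraph.map_adj,
    Fin.castSuccEmb_apply]
  constructor
  · rintro (⟨u, v, h, hu, hv⟩ | ⟨hne, h⟩)
    · exact Or.inr ⟨u, v, h, hu, hv⟩
    · exact Or.inl ⟨hne, h⟩
  · rintro (⟨hne, h⟩ | ⟨u, v, h, hu, hv⟩)
    · exact Or.inr ⟨hne, h⟩
    · exact Or.inl ⟨u, v, h, hu, hv⟩

lemma castSucc_ne_last {n : ℕ} (u : Fin n) : Fin.castSucc u ≠ Fin.last n :=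
  (Fin.castSucc_lt_last u).ne

lemma cone_adj_last {n : ℕ} (H : SimpleGraph (Fin n)) {a : Fin (n+1)} (ha : a ≠ Fin.last n) :
    (cone H).Adj (Fin.last n) a :=
  (cone_adj H _ _).mpr (Or.inl ⟨Ne.symm ha, Or.inl rfl⟩)

lemma cone_adj_castSucc {n : ℕ} (H : SimpleGraph (Fin n)) (u v : Fin n) :
    (cone H).Adj (Fin.castSucc u) (Fin.castSucc v) ↔ H.Adj u v := by
  rw [cone_adj]
  constructor
  · rintro (⟨-, h | h⟩ | ⟨u', v', h, hu, hv⟩)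
    · exact absurd h (castSucc_ne_last u)
    · exact absurd h (castSucc_ne_last v)
    · rw [← Fin.castSucc_injective n hu, ← Fin.castSucc_injective n hv]; exact h
  · exact fun h => Or.inr ⟨u, v, h, rfl, rfl⟩

lemma exists_preimage {n : ℕ} (s : Finset (Fin (n+1))) (hl : Fin.last n ∉ s) :
    ∃ C : Finset (Fin n), C.map Fin.castSuccEmb = s := by
  classical
  refine ⟨(Finset.univ.filter (fun u => Fin.castSucc u ∈ s)), ?_⟩
  ext v
  simp only [Finset.mem_map, Finset.mem_filter, Finset.mem_univ, true_and, Fin.coe_castSuccEmb]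
  constructor
  · rintro ⟨u, hu, rfl⟩; exact hu
  · intro hv
    have hne : v ≠ Fin.last n := fun h => hl (h ▸ hv)
    obtain ⟨u, rfl⟩ := Fin.exists_castSucc_eq.mpr hne
    exact ⟨u, hv, rfl⟩

/-- a clique of `cone H` avoiding the last vertex comes from a clique of `H` -/
lemma clique_of_avoid {n m : ℕ} {H : SimpleGraph (Fin n)} {s : Finset (Fin (n+1))}
    (hs : (cone H).IsNClique m s) (hl : Fin.last n ∉ s) :
    ∃ C : Finset (Fin n), C.map Fin.castSuccEmb = s ∧ H.IsNClique m C := by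
  obtain ⟨C, rfl⟩ := exists_preimage s hl
  refine ⟨C, rfl, ?_, ?_⟩
  · intro u hu v hv huv
    have hadj := hs.1 (Finset.mem_coe.mpr (Finset.mem_map_of_mem _ hu))
      (Finset.mem_coe.mpr (Finset.mem_map_of_mem _ hv))
      (by simpa [Fin.castSuccEmb] using fun h => huv (Fin.castSucc_injective n h))
    exact (cone_adj_castSucc H u v).mp (by simpa using hadj)
  · simpa using hs.2

/-- a clique of `cone H` containing the last vertex -/
lemma clique_of_mem {n m : ℕ} {H : SimpleGraph (Fin n)} {s : Finset (Fin (n+1))}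
    (hs : (cone H).IsNClique m s) (hl : Fin.last n ∈ s) :
    ∃ C : Finset (Fin n), s = insert (Fin.last n) (C.map Fin.castSuccEmb) ∧
      H.IsNClique (m - 1) C := by
  have herase : (cone H).IsNClique (m - 1) (s.erase (Fin.last n)) := by
    refine ⟨hs.1.subset (by simp [Finset.erase_subset, Finset.coe_subset]), ?_⟩
    rw [Finset.card_erase_of_mem hl, hs.2]
  obtain ⟨C, hmap, hC⟩ := clique_of_avoid herase (Finset.notMem_erase _ _)
  exact ⟨C, by rw [hmap, Finset.insert_erase hl], hC⟩

lemma cone_cliqueFree {n m : ℕ} {H : SimpleGraph (Fin n)} (h : H.CliqueFree m) :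
    (cone H).CliqueFree (m + 1) := by
  intro s hs
  by_cases hl : Fin.last n ∈ s
  · obtain ⟨C, -, hC⟩ := clique_of_mem hs hl
    exact h C (by simpa using hC)
  · obtain ⟨C, -, hC⟩ := clique_of_avoid hs hl
    exact (h.mono (Nat.le_succ m)) C hC

lemma cone_clique {n m : ℕ} {H : SimpleGraph (Fin n)} {C : Finset (Fin n)}
    (hC : H.IsNClique m C) :
    (cone H).IsNClique (m + 1) (insert (Fin.last n) (C.map Fin.castSuccEmb)) := by
  have hbase : (cone H).IsNClique m (C.map Fin.castSuccEmb) :=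
    (hC.map (f := Fin.castSuccEmb)).mono le_sup_left
  refine hbase.insert ?_
  intro b hb
  obtain ⟨u, -, rfl⟩ := Finset.mem_map.mp hb
  exact cone_adj_last H (by simpa using castSucc_ne_last u)

lemma cone_colorable {n m : ℕ} {H : SimpleGraph (Fin n)}
    (h : (cone H).Colorable (m + 1)) : H.Colorable m := by
  classical
  obtain ⟨C⟩ := h
  have D : H.Coloring {x : Fin (m+1) // ¬ x = C (Fin.last n)} :=
    SimpleGraph.Coloring.mk
      (fun u => ⟨C (Fin.castSucc u), by
        have := C.valid (cone_adj_last H (castSucc_ne_last u))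
        exact fun hx => this (by rw [hx])⟩)
      (by
        intro u v huv h'
        exact C.valid ((cone_adj_castSucc H u v).mpr huv) (by
          simpa [Subtype.ext_iff] using h'))
  have hcol := D.colorable
  rwa [Fintype.card_subtype_compl, Fintype.card_fin, Fintype.card_subtype_eq,
    Nat.add_sub_cancel] at hcol

lemma cone_chromatic {n : ℕ} (H : SimpleGraph (Fin n)) :
    H.chromaticNumber + 1 ≤ (cone H).chromaticNumber := by
  have hfin : (cone H).Colorable (Fintype.card (Fin (n+1))) := (cone H).colorable_of_fintype
  have hne : (cone H).chromaticNumber ≠ ⊤ :=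
    SimpleGraph.chromaticNumber_ne_top_iff_exists.mpr ⟨_, hfin⟩
  have hpos : 0 < (cone H).chromaticNumber := SimpleGraph.chromaticNumber_pos hfin
  set m := ENat.toNat ((cone H).chromaticNumber) with hm
  have hcast : (m : ℕ∞) = (cone H).chromaticNumber := ENat.coe_toNat hne
  have hm1 : 1 ≤ m := by
    rcases Nat.eq_zero_or_pos m with h0 | h; swap
    · exact h
    · rw [h0] at hcast; rw [← hcast] at hpos; simp at hpos
  have hcol : (cone H).Colorable ((m - 1) + 1) := by
    rw [Nat.sub_add_cancel hm1]
    exact (cone H).colorable_chromaticNumber_of_fintype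
  have h2 : H.chromaticNumber ≤ ((m - 1 : ℕ) : ℕ∞) :=
    (cone_colorable hcol).chromaticNumber_le
  calc H.chromaticNumber + 1 ≤ ((m - 1 : ℕ) : ℕ∞) + 1 := add_le_add_left h2 1
    _ = ((m : ℕ) : ℕ∞) := by
        rw [show ((m:ℕ):ℕ∞) = (((m-1)+1 : ℕ) : ℕ∞) by rw [Nat.sub_add_cancel hm1]]
        push_cast; rfl
    _ = _ := hcast

lemma cone_neighborSet_castSucc {n : ℕ} (H : SimpleGraph (Fin n)) (u : Fin n) :
    (cone H).neighborSet (Fin.castSucc u) =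
      insert (Fin.last n) (Fin.castSucc '' H.neighborSet u) := by
  ext v
  simp only [SimpleGraph.mem_neighborSet, Set.mem_insert_iff, Set.mem_image]
  rw [cone_adj]
  constructor
  · rintro (⟨hne, h | h⟩ | ⟨u', v', h, hu, hv⟩)
    · exact absurd h (castSucc_ne_last u)
    · exact Or.inl h
    · exact Or.inr ⟨v', by rwa [← Fin.castSucc_injective n hu], hv⟩
  · rintro (rfl | ⟨w, hw, rfl⟩)
    · exact Or.inl ⟨castSucc_ne_last u, Or.inr rfl⟩
    · exact Or.inr ⟨u, w, hw, rfl, rfl⟩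

lemma cone_deg_castSucc {n : ℕ} (H : SimpleGraph (Fin n)) (u : Fin n) :
    ((cone H).neighborSet (Fin.castSucc u)).ncard = (H.neighborSet u).ncard + 1 := by
  rw [cone_neighborSet_castSucc,
    Set.ncard_insert_of_notMem (by
      rintro ⟨w, -, hw⟩; exact castSucc_ne_last w hw) (Set.toFinite _),
    Set.ncard_image_of_injective _ (Fin.castSucc_injective n)]

lemma cone_neighborSet_last {n : ℕ} (H : SimpleGraph (Fin n)) :
    (cone H).neighborSet (Fin.last n) = {Fin.last n}ᶜ := by
  ext v
  simp only [SimpleGraph.mem_neighborSet, Set.mem_compl_iff, Set.mem_singleton_iff]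
  constructor
  · exact fun h hv => (cone H).loopless.irrefl _ (hv ▸ h)
  · exact fun h => cone_adj_last H (Ne.symm (fun h' => h h'.symm))

lemma cone_deg_last {n : ℕ} (H : SimpleGraph (Fin n)) :
    ((cone H).neighborSet (Fin.last n)).ncard = n := by
  rw [cone_neighborSet_last]
  have := Set.ncard_add_ncard_compl ({Fin.last n} : Set (Fin (n+1)))
  rw [Set.ncard_singleton] at this
  have hcard : Nat.card (Fin (n+1)) = n + 1 := by simp
  omega

/-- `Λ_r(H)`: `(r-1)|V(H)|` minus the maximum, over `r`-cliques `C` of `H`, of the sum of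
the degrees of the vertices of `C`. -/
noncomputable def lamGraph (r : ℕ) {n : ℕ} (H : SimpleGraph (Fin n)) : ℕ :=
  (r - 1) * n -
    sSup {d : ℕ | ∃ C : Finset (Fin n), H.IsNClique r C ∧
      d = ∑ v ∈ C, (H.neighborSet v).ncard}

lemma cone_sum_deg {n r : ℕ} (H : SimpleGraph (Fin n)) (C : Finset (Fin n))
    (hcard : C.card = r - 1) :
    ∑ v ∈ insert (Fin.last n) (C.map Fin.castSuccEmb), ((cone H).neighborSet v).ncard
      = (∑ u ∈ C, (H.neighborSet u).ncard) + (n + (r - 1)) := by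
  have hnot : Fin.last n ∉ C.map Fin.castSuccEmb := by
    intro h; obtain ⟨u, -, hu⟩ := Finset.mem_map.mp h
    exact castSucc_ne_last u (by simpa using hu)
  rw [Finset.sum_insert hnot, cone_deg_last, Finset.sum_map]
  have : ∀ u ∈ C, ((cone H).neighborSet (Fin.castSuccEmb u)).ncard
      = (H.neighborSet u).ncard + 1 := fun u _ => cone_deg_castSucc H u
  rw [Finset.sum_congr rfl this, Finset.sum_add_distrib, Finset.sum_const, smul_eq_mul,
    mul_one, hcard]
  omega

lemma lamGraph_cone {n r : ℕ} (H : SimpleGraph (Fin n)) (hr : 3 ≤ r)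
    (hcf : H.CliqueFree r) (hcl : ∃ C, H.IsNClique (r - 1) C) :
    lamGraph r (cone H) = lamGraph (r - 1) H := by
  classical
  set c := n + (r - 1) with hc
  set S := {d : ℕ | ∃ C : Finset (Fin n), H.IsNClique (r-1) C ∧
      d = ∑ v ∈ C, (H.neighborSet v).ncard} with hS
  set S' := {d : ℕ | ∃ C : Finset (Fin (n+1)), (cone H).IsNClique r C ∧
      d = ∑ v ∈ C, ((cone H).neighborSet v).ncard} with hS'
  obtain ⟨C₀, hC₀⟩ := hcl
  have hSne : S.Nonempty := ⟨_, C₀, hC₀, rfl⟩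
  have hSbdd : BddAbove S := by
    refine ⟨(r - 1) * n, ?_⟩
    rintro d ⟨C, hC, rfl⟩
    calc ∑ v ∈ C, (H.neighborSet v).ncard ≤ ∑ _v ∈ C, n := by
          refine Finset.sum_le_sum fun v _ => ?_
          have := Set.ncard_le_ncard (Set.subset_univ (H.neighborSet v)) (Set.toFinite _)
          simpa [Set.ncard_univ] using this
      _ = (r - 1) * n := by rw [Finset.sum_const, smul_eq_mul, hC.2]
  have himg : S' = (fun d => d + c) '' S := by
    ext d
    constructor
    · rintro ⟨C', hC', rfl⟩
      have hl : Fin.last n ∈ C' := by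
        by_contra hl
        obtain ⟨C, -, hC⟩ := clique_of_avoid hC' hl
        exact hcf C hC
      obtain ⟨C, rfl, hC⟩ := clique_of_mem hC' hl
      exact ⟨_, ⟨C, hC, rfl⟩, (cone_sum_deg H C hC.2).symm⟩
    · rintro ⟨d, ⟨C, hC, rfl⟩, rfl⟩
      refine ⟨insert (Fin.last n) (C.map Fin.castSuccEmb), ?_, (cone_sum_deg H C hC.2).symm⟩
      have := cone_clique hC
      rwa [Nat.sub_add_cancel (by omega)] at this
  have hsup : sSup S' = sSup S + c := by
    apply le_antisymm
    · apply csSup_le (by rw [himg]; exact hSne.image _)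
      rintro d hd
      rw [himg] at hd
      obtain ⟨d', hd', rfl⟩ := hd
      exact add_le_add_left (le_csSup hSbdd hd') c
    · apply le_csSup
      · rw [himg]
        refine ⟨sSup S + c, ?_⟩
        rintro d ⟨d', hd', rfl⟩
        exact add_le_add_left (le_csSup hSbdd hd') c
      · rw [himg]; exact ⟨sSup S, Nat.sSup_mem hSne hSbdd, rfl⟩
  show (r - 1) * (n + 1) - sSup S' = (r - 1 - 1) * n - sSup S
  rw [hsup]
  have harith : (r - 1) * (n + 1) = (r - 1 - 1) * n + c := by
    obtain ⟨r', rfl⟩ : ∃ r', r = r' + 3 := ⟨r - 3, by omega⟩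
    simp only [hc, show r' + 3 - 1 = r' + 2 from rfl, show r' + 2 - 1 = r' + 1 from rfl]
    ring
  rw [harith, Nat.add_sub_add_right]

def shiftG (N : ℕ) : SimpleGraph {p : Fin N × Fin N // p.1 < p.2} where
  Adj a b := a.1.2 = b.1.1 ∨ b.1.2 = a.1.1
  symm := ⟨fun a b h => Or.symm h⟩
  loopless := ⟨fun a h => by
    rcases h with h | h <;> exact absurd h (ne_of_gt a.2)⟩

lemma shiftG_cliqueFree (N : ℕ) : (shiftG N).CliqueFree 3 := by
  intro t ht
  rw [SimpleGraph.is3Clique_iff] at ht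
  obtain ⟨a, b, c, hab, hac, hbc, -⟩ := ht
  have ha := a.2; have hb := b.2; have hc := c.2
  rw [Fin.lt_def] at ha hb hc
  rcases hab with h1 | h1 <;> rcases hac with h2 | h2 <;> rcases hbc with h3 | h3 <;>
    (apply_fun Fin.val at h1 h2 h3) <;> omega

lemma shiftG_not_colorable {N m : ℕ} (h : 2 ^ m < N) : ¬ (shiftG N).Colorable m := by
  classical
  rintro ⟨C⟩
  set g : Fin N → Finset (Fin m) := fun i =>
    Finset.univ.filter (fun c => ∃ j : Fin N, ∃ h : i < j, C ⟨(i, j), h⟩ = c) with hg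
  have key : ∀ i i' : Fin N, i < i' → g i = g i' → False := by
    intro i i' hlt hgeq
    have hmem : C ⟨(i, i'), hlt⟩ ∈ g i := by
      simp only [hg, Finset.mem_filter, Finset.mem_univ, true_and]
      exact ⟨i', hlt, rfl⟩
    rw [hgeq] at hmem
    simp only [hg, Finset.mem_filter, Finset.mem_univ, true_and] at hmem
    obtain ⟨j, hj, hcol⟩ := hmem
    have hadj : (shiftG N).Adj ⟨(i, i'), hlt⟩ ⟨(i', j), hj⟩ := Or.inl rfl
    exact C.valid hadj hcol.symm
  have hinj : Function.Injective g := by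
    intro i i' hgeq
    by_contra hne
    rcases Ne.lt_or_gt hne with hlt | hlt
    · exact key i i' hlt hgeq
    · exact key i' i hlt hgeq.symm
  have := Fintype.card_le_of_injective g hinj
  rw [Fintype.card_fin, Fintype.card_finset, Fintype.card_fin] at this
  omega

lemma shiftG_adj_pair {N : ℕ} (hN : 3 ≤ N) :
    ∃ a b, (shiftG N).Adj a b := by
  have h01 : (⟨0, by omega⟩ : Fin N) < ⟨1, by omega⟩ := by simp [Fin.lt_def]
  have h12 : (⟨1, by omega⟩ : Fin N) < ⟨2, by omega⟩ := by simp [Fin.lt_def]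
  exact ⟨⟨(⟨0, by omega⟩, ⟨1, by omega⟩), h01⟩, ⟨(⟨1, by omega⟩, ⟨2, by omega⟩), h12⟩,
    Or.inl rfl⟩

lemma pair_clique {α : Type*} [DecidableEq α] {G : SimpleGraph α} {a b : α} (h : G.Adj a b) :
    G.IsNClique 2 ({a, b} : Finset α) := by
  refine ⟨?_, ?_⟩
  · rw [Finset.coe_insert, Finset.coe_singleton]
    exact SimpleGraph.isClique_pair.mpr (fun _ => h)
  · rw [Finset.card_insert_of_notMem (by simpa using h.ne), Finset.card_singleton]

lemma chrom_ge_of_not_colorable {α : Type*} {G : SimpleGraph α} {k : ℕ} (hk : 1 ≤ k)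
    (h : ¬ G.Colorable (k - 1)) : (k : ℕ∞) ≤ G.chromaticNumber := by
  by_contra hle
  push_neg at hle
  apply h
  rw [← SimpleGraph.chromaticNumber_le_iff_colorable]
  have : G.chromaticNumber < ((k - 1 : ℕ) : ℕ∞) + 1 := by
    rwa [show ((k - 1 : ℕ) : ℕ∞) + 1 = (k : ℕ∞) by
      rw [show (k : ℕ∞) = (((k - 1) + 1 : ℕ) : ℕ∞) by rw [Nat.sub_add_cancel hk]]; push_cast; rfl]
  exact Order.le_of_lt_add_one this

lemma shift_base (k' : ℕ) (hk' : 1 ≤ k') :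
    ∃ n, ∃ H : SimpleGraph (Fin n), H.CliqueFree 3 ∧ (∃ C, H.IsNClique 2 C) ∧
      (k' : ℕ∞) ≤ H.chromaticNumber := by
  classical
  set N := 2 ^ (k' - 1) + 2 with hN
  have hN3 : 3 ≤ N := by
    have : 1 ≤ 2 ^ (k' - 1) := Nat.one_le_two_pow
    omega
  set V := {p : Fin N × Fin N // p.1 < p.2}
  set e : V ≃ Fin (Fintype.card V) := Fintype.equivFin V with he
  set G' : SimpleGraph (Fin (Fintype.card V)) := (shiftG N).comap e.symm.toEmbedding with hG'
  have ι : G' ≃g shiftG N := SimpleGraph.Iso.comap e.symm (shiftG N)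
  refine ⟨Fintype.card V, G', ?_, ?_, ?_⟩
  · exact SimpleGraph.CliqueFree.comap ι.toEmbedding.isContained (shiftG_cliqueFree N)
  · obtain ⟨a, b, hab⟩ := shiftG_adj_pair hN3
    exact ⟨{ι.symm a, ι.symm b}, pair_clique (ι.symm.map_adj_iff.mpr (by simpa using hab))⟩
  · refine chrom_ge_of_not_colorable hk' (fun hc => ?_)
    exact shiftG_not_colorable (show 2 ^ (k' - 1) < N by omega)
      (SimpleGraph.Colorable.of_hom ι.symm.toHom hc)

lemma exists_witness (j k' : ℕ) (hk' : 1 ≤ k') :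
    ∃ n, ∃ H : SimpleGraph (Fin n), H.CliqueFree (3 + j) ∧ (∃ C, H.IsNClique (2 + j) C) ∧
      (k' : ℕ∞) ≤ H.chromaticNumber := by
  induction j with
  | zero => simpa using shift_base k' hk'
  | succ j ih =>
    obtain ⟨n, H, h1, h2, h3⟩ := ih
    refine ⟨n + 1, cone H, ?_, ?_, ?_⟩
    · have := cone_cliqueFree h1
      rwa [show 3 + j + 1 = 3 + (j + 1) by omega] at this
    · obtain ⟨C, hC⟩ := h2
      have := cone_clique hC
      rw [show 2 + j + 1 = 2 + (j + 1) by omega] at this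
      exact ⟨_, this⟩
    · exact h3.trans (le_trans le_self_add (cone_chromatic H))

/-- `Λ_r(k)`: the minimum of `Λ_r(H)` over graphs `H` with clique number exactly `r`
and chromatic number at least `k`. -/
noncomputable def lam (r k : ℕ) : ℕ :=
  sInf {L : ℕ | ∃ n : ℕ, ∃ H : SimpleGraph (Fin n), H.CliqueFree (r + 1) ∧
    (∃ C : Finset (Fin n), H.IsNClique r C) ∧ (k : ℕ∞) ≤ H.chromaticNumber ∧
    L = lamGraph r H}

theorem lam_monotone (k r : ℕ) (hk : 3 ≤ k) (hr : 3 ≤ r) :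
    lam r k ≤ lam (r - 1) (k - 1) := by
  obtain ⟨n₀, H₀, h1, h2, h3⟩ := exists_witness (r - 3) (k - 1) (by omega)
  rw [show 3 + (r - 3) = (r - 1) + 1 by omega] at h1
  rw [show 2 + (r - 3) = r - 1 by omega] at h2
  have hBne : {L : ℕ | ∃ n : ℕ, ∃ H : SimpleGraph (Fin n), H.CliqueFree ((r - 1) + 1) ∧
      (∃ C : Finset (Fin n), H.IsNClique (r - 1) C) ∧
      ((k - 1 : ℕ) : ℕ∞) ≤ H.chromaticNumber ∧
      L = lamGraph (r - 1) H}.Nonempty := ⟨_, n₀, H₀, h1, h2, h3, rfl⟩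
  obtain ⟨n, H, hcf, hcl, hchi, hval⟩ := Nat.sInf_mem hBne
  have hcf' : H.CliqueFree r := by rwa [show (r - 1) + 1 = r by omega] at hcf
  apply Nat.sInf_le
  refine ⟨n + 1, cone H, cone_cliqueFree hcf', ?_, ?_, ?_⟩
  · obtain ⟨C, hC⟩ := hcl
    have := cone_clique hC
    rw [show (r - 1) + 1 = r by omega] at this
    exact ⟨_, this⟩
  · have h4 : ((k - 1 : ℕ) : ℕ∞) + 1 ≤ (cone H).chromaticNumber :=
      le_trans (add_le_add_left hchi 1) (cone_chromatic H)
    rwa [show ((k - 1 : ℕ) : ℕ∞) + 1 = (k : ℕ∞) by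
      rw [show (k : ℕ∞) = (((k - 1) + 1 : ℕ) : ℕ∞) by rw [Nat.sub_add_cancel (by omega)]]
      push_cast; rfl] at h4
  · rw [lamGraph_cone H hr hcf' hcl]
    exact hval
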